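/- Let η be the operator on formal power series defined by (η f)(x) = f(qx). Then for all n ≥ 0, (bx + x²η)^n applied to x equals x^{n+1} · Σ_{j=0}^{n} b^{n−j} · x^j · q^{j²} · qbinom(n, j). -/

import Mathlib

open Finset PowerSeries

variable {R : Type*} [CommRing R]

/-- The Gaussian (q-)binomial coefficient, via the Pascal-type recurrence
`[n+1, k+1] = q^(n-k) [n, k] + [n, k+1]`. -/
def qbinom (q : R) : ℕ → ℕ → R
  | _, 0 => 1
  | 0, _ + 1 => 0
  | n + 1, k + 1 => qbinom q n k * q ^ (n - k) + qbinom q n (k + 1)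

/-- The q-biperiodic Fibonacci sequence. -/
def biF (a b q : R) : ℕ → R
  | 0 => 0
  | 1 => 1
  | n + 2 => (if (n + 2) % 2 = 0 then a else b) * biF a b q (n + 1) + q ^ n * biF a b q n

/-- The auxiliary q-biperiodic Fibonacci sequence (same recurrence, initial values 1, 0). -/
def biFhat (a b q : R) : ℕ → R
  | 0 => 1
  | 1 => 0
  | n + 2 => (if (n + 2) % 2 = 0 then a else b) * biFhat a b q (n + 1) + q ^ n * biFhat a b q n

/-- The biperiodic Fibonacci sequence. -/
def biT (a b : ℕ) : ℕ → ℕ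
  | 0 => 0
  | 1 => 1
  | n + 2 => (if (n + 2) % 2 = 0 then a else b) * biT a b (n + 1) + biT a b n

/-- The Schur polynomials D_n(q). -/
def schurD (q : R) : ℕ → R
  | 0 => 0
  | 1 => 1
  | n + 2 => schurD q (n + 1) + q ^ n * schurD q n

/-- The auxiliary Schur polynomials with initial values 1, 0. -/
def schurDhat (q : R) : ℕ → R
  | 0 => 1
  | 1 => 0
  | n + 2 => schurDhat q (n + 1) + q ^ n * schurDhat q n

/-- The shifted q-biperiodic Fibonacci sequence F^(s)_n(q). -/
def biFs (a b q : R) (s : ℕ) : ℕ → R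
  | 0 => 0
  | 1 => 1
  | n + 2 =>
      (if (n + 2) % 2 = 0 then a ^ ((s + 1) % 2) * b ^ (1 - (s + 1) % 2)
       else a ^ (1 - (s + 1) % 2) * b ^ ((s + 1) % 2)) * biFs a b q s (n + 1)
        + q ^ (n + s) * biFs a b q s n

lemma qbinom_zero (q : R) (n : ℕ) : qbinom q n 0 = 1 := by cases n <;> rfl

lemma qbinom_eq_zero (q : R) : ∀ n k : ℕ, n < k → qbinom q n k = 0
  | 0, _+1, _ => rfl
  | n+1, k+1, h => by
    rw [qbinom, qbinom_eq_zero q n k (by omega), qbinom_eq_zero q n (k+1) (by omega)]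
    ring

lemma rescale_C' (q a : R) : rescale q (C a) = C a := by
  ext n
  rw [coeff_rescale]
  simp only [coeff_C]
  split_ifs with h
  · subst h; simp
  · simp

lemma coef_rec (b q : R) {n j : ℕ} (h : j ≤ n) :
    b * (b ^ (n - (j+1)) * q ^ ((j+1) ^ 2) * qbinom q n (j+1))
      + q ^ (n+1) * q ^ j * (b ^ (n - j) * q ^ (j ^ 2) * qbinom q n j)
    = b ^ (n - j) * q ^ ((j+1) ^ 2) * qbinom q (n+1) (j+1) := by
  rw [show qbinom q (n+1) (j+1) = qbinom q n j * q ^ (n - j) + qbinom q n (j+1) from rfl]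
  rcases eq_or_lt_of_le h with rfl | h
  · rw [qbinom_eq_zero q j (j+1) (by omega), Nat.sub_self]
    have hq : q ^ (j+1) * q ^ j * q ^ (j^2) = q ^ ((j+1)^2) := by
      rw [← pow_add, ← pow_add]; congr 1; ring
    linear_combination qbinom q j j * hq
  · have hb : b * b ^ (n - (j+1)) = b ^ (n - j) := by
      rw [← pow_succ']; congr 1; omega
    have hq : q ^ (n+1) * q ^ j * q ^ (j ^ 2) = q ^ ((j+1)^2) * q ^ (n - j) := by
      rw [← pow_add, ← pow_add, ← pow_add]; congr 1
      have h2 : (j+1)^2 = j^2 + 2*j + 1 := by ring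
      omega
    linear_combination (q ^ ((j+1)^2) * qbinom q n (j+1)) * hb
      + (b ^ (n-j) * qbinom q n j) * hq


theorem stmt8 (b q : R) (n : ℕ) :
    (fun f : R⟦X⟧ => PowerSeries.C b * PowerSeries.X * f
        + PowerSeries.X ^ 2 * PowerSeries.rescale q f)^[n] PowerSeries.X =
      PowerSeries.X ^ (n + 1) *
        ∑ j ∈ Finset.range (n + 1),
          PowerSeries.C (b ^ (n - j) * q ^ (j ^ 2) * qbinom q n j) * PowerSeries.X ^ j := by
  induction n with
  | zero => simp [qbinom]
  | succ n ih =>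
    rw [Function.iterate_succ_apply', ih]
    have hres : rescale q (X ^ (n+1) *
          ∑ j ∈ range (n+1), C (b ^ (n - j) * q ^ (j ^ 2) * qbinom q n j) * X ^ j)
        = C (q ^ (n+1)) * X ^ (n+1) *
          ∑ j ∈ range (n+1), C (b ^ (n - j) * q ^ (j ^ 2) * qbinom q n j * q ^ j) * X ^ j := by
      rw [map_mul, map_pow, rescale_X, map_sum, mul_pow, ← map_pow]
      congr 1
      refine Finset.sum_congr rfl fun j _ => ?_
      rw [map_mul, rescale_C', map_pow, rescale_X, mul_pow, ← map_pow, map_mul]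
      simp only [map_mul]
      ring
    have key :
        (∑ j ∈ range (n + 2), C (b ^ (n + 1 - j) * q ^ (j ^ 2) * qbinom q (n+1) j) * X ^ j)
        = C b * ∑ j ∈ range (n + 1), C (b ^ (n - j) * q ^ (j ^ 2) * qbinom q n j) * X ^ j
          + C (q ^ (n+1)) * X *
            ∑ j ∈ range (n + 1), C (b ^ (n - j) * q ^ (j ^ 2) * qbinom q n j * q ^ j) * X ^ j := by
      rw [Finset.mul_sum]
      have h1 : ∑ j ∈ range (n + 1), C b * (C (b ^ (n - j) * q ^ (j ^ 2) * qbinom q n j) * X ^ j)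
          = ∑ j ∈ range (n + 2), C (b * (b ^ (n - j) * q ^ (j ^ 2) * qbinom q n j)) * X ^ j := by
        conv_rhs => rw [Finset.sum_range_succ]
        rw [qbinom_eq_zero q n (n+1) (by omega)]
        simp [mul_assoc, map_mul]
      rw [h1, Finset.mul_sum]
      rw [Finset.sum_range_succ'
        (fun j => C (b * (b ^ (n - j) * q ^ (j ^ 2) * qbinom q n j)) * X ^ j) (n+1)]
      rw [Finset.sum_range_succ'
        (fun j => C (b ^ (n + 1 - j) * q ^ (j ^ 2) * qbinom q (n+1) j) * X ^ j) (n+1)]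
      simp only [qbinom_zero, Nat.sub_zero, pow_zero, mul_one, one_mul]
      rw [add_right_comm, ← Finset.sum_add_distrib]
      have hc : (b : R) ^ (n + 1) = b * b ^ n := pow_succ' b n
      rw [hc]
      congr 1
      · refine Finset.sum_congr rfl fun j hj => ?_
        have hjn : j ≤ n := Nat.lt_succ_iff.mp (Finset.mem_range.mp hj)
        rw [show n + 1 - (j + 1) = n - j from by omega, ← coef_rec b q hjn]
        simp only [map_add, map_mul]
        ring
      · ring_nf
    rw [hres, key]
    ring
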